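/- arXiv:2510.15593 — 4 statements merged into one kernel-verified Lean document; each statement's English description precedes it below -/
import Mathlib

section
/- Let G be a finite simple graph, e = {u,v} a bridge of G, and e' = {x,y} an edge not in G (with e' ≠ e). The edge e is a non-bridge in the graph G + e' (G with e' added) if and only if e' crosses the reachability partition of e, i.e., exactly one endpoint of e' lies in Comp(u,e). -/
open SimpleGraph

private lemma aux_collapse {V : Type*} {D : SimpleGraph V} {x y : V}
    (hxy : D.Reachable x y) {a b : V}
    (h : (D ⊔ SimpleGraph.fromEdgeSet {s(x, y)}).Reachable a b) : D.Reachable a b := by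
  obtain ⟨w⟩ := h
  induction w with
  | nil => exact Reachable.refl _
  | cons h p ih =>
    refine Reachable.trans ?_ ih
    rcases h with hD | hE
    · exact hD.reachable
    · rw [SimpleGraph.fromEdgeSet_adj] at hE
      have := hE.1
      simp only [Set.mem_singleton_iff, Sym2.eq, Sym2.rel_iff'] at this
      rcases this with ⟨rfl, rfl⟩ | ⟨rfl, rfl⟩
      · exact hxy
      · exact hxy.symm

private lemma aux_side {V : Type*} {D : SimpleGraph V} {G : SimpleGraph V} {u v : V}
    (hD : D = G.deleteEdges {s(u, v)}) :
    ∀ {a w : V}, (D.Reachable u a ∨ D.Reachable v a) → G.Walk a w →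
      (D.Reachable u w ∨ D.Reachable v w) := by
  intro a w ha p
  induction p with
  | nil => exact ha
  | @cons c d w h p ih =>
    apply ih
    by_cases he : s(c, d) = s(u, v)
    · simp only [Sym2.eq, Sym2.rel_iff'] at he
      rcases he with ⟨rfl, rfl⟩ | ⟨rfl, rfl⟩
      · exact Or.inr (Reachable.refl _)
      · exact Or.inl (Reachable.refl _)
    · have hadj : D.Adj c d := by
        rw [hD]; simp [h, he]
      rcases ha with h1 | h1
      · exact Or.inl (h1.trans hadj.reachable)
      · exact Or.inr (h1.trans hadj.reachable)

/-- Let `G` be a finite (connected) simple graph, `e = {u,v}` a bridge of `G`,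
and `e' = {x,y}` an edge not in `G` with `e' ≠ e`. Then `e` is a non-bridge of `G + e'`
iff `e'` is a crossing edge of the reachability partition of `e`. -/
theorem stmt_1 {V : Type*} [Fintype V] (G : SimpleGraph V) (hG : G.Connected)
    (u v x y : V) (hb : G.IsBridge s(u, v)) (hxy : x ≠ y)
    (hne : s(x, y) ≠ s(u, v)) (hnotin : s(x, y) ∉ G.edgeSet) :
    ¬ (G ⊔ SimpleGraph.fromEdgeSet {s(x, y)}).IsBridge s(u, v) ↔
      (((G.deleteEdges {s(u, v)}).Reachable u x ∧ (G.deleteEdges {s(u, v)}).Reachable v y) ∨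
       ((G.deleteEdges {s(u, v)}).Reachable u y ∧ (G.deleteEdges {s(u, v)}).Reachable v x)) := by
  set D := G.deleteEdges {s(u, v)} with hDdef
  rw [isBridge_iff] at hb
  have huv : G.Adj u v := by
    by_contra hna
    refine hb ((hG u v).mono (fun a b hab => ?_))
    rw [SimpleGraph.deleteEdges_adj]
    refine ⟨hab, fun h => hna ?_⟩
    rw [Set.mem_singleton_iff] at h
    rw [← SimpleGraph.mem_edgeSet, ← h]; exact hab
  have hnr := hb
  have huvne : u ≠ v := huv.ne
  -- D equals G \ fromEdgeSet {s(u,v)}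
  have hDeq : D = G \ SimpleGraph.fromEdgeSet {s(u, v)} := by
    ext a b
    simp only [hDdef, SimpleGraph.deleteEdges_adj, SimpleGraph.sdiff_adj,
      SimpleGraph.fromEdgeSet_adj, Set.mem_singleton_iff]
    constructor
    · rintro ⟨h1, h2⟩; exact ⟨h1, fun h => h2 h.1⟩
    · rintro ⟨h1, h2⟩; exact ⟨h1, fun h => h2 ⟨h, h1.ne⟩⟩
  have hnr' : ¬ D.Reachable u v := by exact hnr
  -- deletion in the sup graph
  have hDsup : (G ⊔ SimpleGraph.fromEdgeSet {s(x, y)}) \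
      SimpleGraph.fromEdgeSet {s(u, v)} = D ⊔ SimpleGraph.fromEdgeSet {s(x, y)} := by
    ext a b
    simp only [SimpleGraph.sdiff_adj, SimpleGraph.sup_adj, SimpleGraph.fromEdgeSet_adj,
      Set.mem_singleton_iff, hDdef, SimpleGraph.deleteEdges_adj]
    constructor
    · rintro ⟨h1 | h1, h2⟩
      · exact Or.inl ⟨h1, fun h => h2 ⟨h, h1.ne⟩⟩
      · exact Or.inr h1
    · rintro (⟨h1, h2⟩ | h1)
      · exact ⟨Or.inl h1, fun h => h2 h.1⟩
      · refine ⟨Or.inr h1, fun h => hne ?_⟩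
        rw [← h1.1, h.1]
    
  have hbridge : (G ⊔ SimpleGraph.fromEdgeSet {s(x, y)}).IsBridge s(u, v) ↔
      ¬ (D ⊔ SimpleGraph.fromEdgeSet {s(x, y)}).Reachable u v := by
    have hsd : (G ⊔ SimpleGraph.fromEdgeSet {s(x, y)}).deleteEdges {s(u, v)} =
        (G ⊔ SimpleGraph.fromEdgeSet {s(x, y)}) \ SimpleGraph.fromEdgeSet {s(u, v)} := by
      ext a b
      simp only [SimpleGraph.deleteEdges_adj, SimpleGraph.sdiff_adj,
        SimpleGraph.fromEdgeSet_adj, Set.mem_singleton_iff]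
      constructor
      · rintro ⟨h1, h2⟩; exact ⟨h1, fun h => h2 h.1⟩
      · rintro ⟨h1, h2⟩; exact ⟨h1, fun h => h2 ⟨h, h1.ne⟩⟩
    rw [isBridge_iff, hsd, hDsup]
  rw [hbridge, not_not]
  constructor
  · intro hreach
    -- each vertex is on one side
    have hside : ∀ w : V, D.Reachable u w ∨ D.Reachable v w := by
      intro w
      obtain ⟨p⟩ := hG u w
      exact aux_side hDdef (Or.inl (Reachable.refl _)) p
    have hcx := hside x
    have hcy := hside y
    rcases hcx with hx | hx <;> rcases hcy with hy | hy
    · exact absurd (aux_collapse (hx.symm.trans hy) hreach) hnr'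
    · exact Or.inl ⟨hx, hy⟩
    · exact Or.inr ⟨hy, hx⟩
    · exact absurd (aux_collapse (hx.symm.trans hy) hreach) hnr'
  · intro hcross
    have hle : D ≤ D ⊔ SimpleGraph.fromEdgeSet {s(x, y)} := le_sup_left
    have hadjxy : (D ⊔ SimpleGraph.fromEdgeSet {s(x, y)}).Adj x y := by
      right; rw [SimpleGraph.fromEdgeSet_adj]; exact ⟨rfl, hxy⟩
    rcases hcross with ⟨h1, h2⟩ | ⟨h1, h2⟩
    · exact ((h1.mono hle).trans hadjxy.reachable).trans (h2.mono hle).symm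
    · exact ((h1.mono hle).trans hadjxy.symm.reachable).trans (h2.mono hle).symm
end

section
/- Let G = (V,E) be an always-connected temporal graph and k ≥ 1. Suppose E is partitioned into sets U and C such that every temporal edge in U is not l-changeable for any l ≤ k, and every temporal edge in C is l'-changeable for some l' ≤ k-1. Then every temporal edge in U is unchangeable: for all r ∈ ℕ, no edge of U is r-changeable. -/
/-- The `t`-th snapshot of a temporal graph with temporal edge set `E`. -/
def snapshot {V : Type*} (E : Finset (Sym2 V × ℕ)) (t : ℕ) : SimpleGraph V :=
  SimpleGraph.fromEdgeSet {e | (e, t) ∈ E}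

/-- A temporal graph with lifetime `T` is always-connected if every snapshot
`G(t)`, `t ∈ [T]`, is connected. -/
def AlwaysConnected {V : Type*} (T : ℕ) (E : Finset (Sym2 V × ℕ)) : Prop :=
  ∀ t ∈ Finset.Icc 1 T, (snapshot E t).Connected

/-- One edge-relabeling step: some temporal edge `(e,t) ∈ E` is replaced by `(e,t')`
with `t' ≠ t`, where `(e,t') ∉ E`. -/
def Step {V : Type*} [DecidableEq V] (T : ℕ) (E E' : Finset (Sym2 V × ℕ)) : Prop :=
  ∃ (e : Sym2 V) (t t' : ℕ), t ∈ Finset.Icc 1 T ∧ t' ∈ Finset.Icc 1 T ∧ t ≠ t' ∧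
    (e, t) ∈ E ∧ (e, t') ∉ E ∧ E' = insert (e, t') (E.erase (e, t))

/-- A valid reconfiguration sequence of length `k`: each graph is obtained from the
previous by one edge relabeling, and every intermediate graph is always-connected. -/
def ValidSeq {V : Type*} [DecidableEq V] (T : ℕ) (f : ℕ → Finset (Sym2 V × ℕ)) (k : ℕ) : Prop :=
  (∀ i ≤ k, AlwaysConnected T (f i)) ∧ ∀ i < k, Step T (f i) (f (i + 1))

/-- `(e,t)` can be made a non-bridge by some valid reconfiguration sequence of length `k`. -/
def ChangeableIn {V : Type*} [DecidableEq V] (T : ℕ) (E : Finset (Sym2 V × ℕ))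
    (e : Sym2 V) (t : ℕ) (k : ℕ) : Prop :=
  ∃ f : ℕ → Finset (Sym2 V × ℕ), f 0 = E ∧ ValidSeq T f k ∧
    (e, t) ∈ f k ∧ ¬ (snapshot (f k) t).IsBridge e

/-- `(e,t)` is `k`-changeable: `k` is the minimum length of a valid reconfiguration
sequence turning it into a non-bridge. -/
def KChangeable {V : Type*} [DecidableEq V] (T : ℕ) (E : Finset (Sym2 V × ℕ))
    (e : Sym2 V) (t : ℕ) (k : ℕ) : Prop :=
  ChangeableIn T E e t k ∧ ∀ l < k, ¬ ChangeableIn T E e t l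


set_option linter.unusedSectionVars false
set_option maxHeartbeats 1000000

namespace S7
open SimpleGraph

variable {V : Type*} [DecidableEq V]

lemma del_adj (G : SimpleGraph V) (q : Sym2 V) (x y : V) :
    (G.deleteEdges {q}).Adj x y ↔ G.Adj x y ∧ s(x,y) ≠ q := by
  simp only [deleteEdges, sdiff_adj, fromEdgeSet_adj, Set.mem_singleton_iff]
  constructor
  · rintro ⟨h1, h2⟩
    exact ⟨h1, fun he => h2 ⟨he, h1.ne⟩⟩
  · rintro ⟨h1, h2⟩
    exact ⟨h1, fun he => h2 he.1⟩

lemma reachable_transfer {G H : SimpleGraph V} (h : ∀ x y, G.Adj x y → H.Reachable x y) :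
    ∀ {u v}, G.Reachable u v → H.Reachable u v := by
  intro u v huv
  obtain ⟨w⟩ := huv
  induction w with
  | nil => exact Reachable.refl _
  | cons hadj _ ih => exact (h _ _ hadj).trans ih

lemma reach_or_aux {S : SimpleGraph V} {a b v u : V} (w : S.Walk v u) :
    (S.deleteEdges {s(a,b)}).Reachable v u ∨ (S.deleteEdges {s(a,b)}).Reachable v a ∨
      (S.deleteEdges {s(a,b)}).Reachable v b := by
  induction w with
  | nil => exact Or.inl (Reachable.refl _)
  | @cons x y z hadj w ih =>
    by_cases he : s(x,y) = s(a,b)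
    · rw [Sym2.eq_iff] at he
      rcases he with ⟨hxa, hyb⟩ | ⟨hxb, hya⟩
      · subst hxa; exact Or.inr (Or.inl (Reachable.refl _))
      · subst hxb; exact Or.inr (Or.inr (Reachable.refl _))
    · have hadj' : (S.deleteEdges {s(a,b)}).Adj x y := (del_adj S _ x y).2 ⟨hadj, he⟩
      rcases ih with h' | h' | h'
      · exact Or.inl (hadj'.reachable.trans h')
      · exact Or.inr (Or.inl (hadj'.reachable.trans h'))
      · exact Or.inr (Or.inr (hadj'.reachable.trans h'))

lemma reach_or {S : SimpleGraph V} {a b v : V} (h : S.Reachable v a) :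
    (S.deleteEdges {s(a,b)}).Reachable v a ∨ (S.deleteEdges {s(a,b)}).Reachable v b := by
  obtain ⟨w⟩ := h
  rcases reach_or_aux (a := a) (b := b) w with h' | h' | h'
  · exact Or.inl h'
  · exact Or.inl h'
  · exact Or.inr h'

lemma not_isBridge {G : SimpleGraph V} {a b : V}
    (h : (G.deleteEdges {s(a,b)}).Reachable a b) : ¬ G.IsBridge s(a,b) := by
  rw [isBridge_iff]
  push_neg
  exact h

lemma isBridge_not_reach {G : SimpleGraph V} {a b : V} (h : G.IsBridge s(a,b)) :
    ¬ (G.deleteEdges {s(a,b)}).Reachable a b := isBridge_iff.1 h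

lemma isBridge_adj {G : SimpleGraph V} {a b : V} (h : G.IsBridge s(a,b)) (hc : G.Preconnected) :
    G.Adj a b := h.reachable_iff_adj.1 (hc a b)

lemma isBridge_ne {G : SimpleGraph V} {a b : V} (h : G.IsBridge s(a,b)) : a ≠ b := by
  rintro rfl
  exact isBridge_iff.1 h (Reachable.refl _)

lemma del_connected {S : SimpleGraph V} {x y : V} (hS : S.Connected)
    (h : ¬ S.IsBridge s(x,y)) : (S.deleteEdges {s(x,y)}).Connected := by
  by_cases hadj : S.Adj x y
  · have hreach : (S.deleteEdges {s(x,y)}).Reachable x y := by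
      by_contra hr
      exact h (isBridge_iff.2 hr)
    rw [connected_iff] at hS ⊢
    refine ⟨fun u v => ?_, hS.2⟩
    refine reachable_transfer (fun u' v' hadj' => ?_) (hS.1 u v)
    by_cases he : s(u',v') = s(x,y)
    · rw [Sym2.eq_iff] at he
      rcases he with ⟨hxa, hyb⟩ | ⟨hxb, hya⟩
      · subst hxa; subst hyb; exact hreach
      · subst hxb; subst hya; exact hreach.symm
    · exact (((del_adj S _ u' v').2 ⟨hadj', he⟩)).reachable
  · have heq : S.deleteEdges {s(x,y)} = S := by
      ext u v
      rw [del_adj]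
      refine ⟨fun h' => h'.1, fun h' => ⟨h', fun he => ?_⟩⟩
      rw [Sym2.eq_iff] at he
      rcases he with ⟨hxa, hyb⟩ | ⟨hxb, hya⟩
      · subst hxa; subst hyb; exact hadj h'
      · subst hxb; subst hya; exact hadj h'.symm
    rw [heq]; exact hS

lemma snapshot_adj (X : Finset (Sym2 V × ℕ)) (τ : ℕ) (x y : V) :
    (snapshot X τ).Adj x y ↔ (s(x,y), τ) ∈ X ∧ x ≠ y := by
  simp [snapshot, fromEdgeSet_adj, Set.mem_setOf_eq]

lemma snapshot_mono {X Y : Finset (Sym2 V × ℕ)} {τ : ℕ}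
    (h : ∀ d : Sym2 V, (d,τ) ∈ X → (d,τ) ∈ Y) : snapshot X τ ≤ snapshot Y τ := by
  intro x y hxy
  rw [snapshot_adj] at hxy ⊢
  exact ⟨h _ hxy.1, hxy.2⟩

lemma snapshot_eq {X Y : Finset (Sym2 V × ℕ)} {τ : ℕ}
    (h : ∀ d : Sym2 V, (d,τ) ∈ X ↔ (d,τ) ∈ Y) : snapshot X τ = snapshot Y τ := by
  ext x y
  rw [snapshot_adj, snapshot_adj, h]

lemma mem_step {X : Finset (Sym2 V × ℕ)} {c : Sym2 V} {τ τ' : ℕ} {d : Sym2 V} {σ : ℕ} :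
    (d,σ) ∈ insert (c,τ') (X.erase (c,τ)) ↔
      (d,σ) = (c,τ') ∨ ((d,σ) ∈ X ∧ (d,σ) ≠ (c,τ)) := by
  simp only [Finset.mem_insert, Finset.mem_erase]
  tauto

/-- snapshot unchanged at times other than τ, τ'. -/
lemma snapshot_step_other {X : Finset (Sym2 V × ℕ)} {c : Sym2 V} {τ τ' σ : ℕ}
    (h1 : σ ≠ τ) (h2 : σ ≠ τ') :
    snapshot (insert (c,τ') (X.erase (c,τ))) σ = snapshot X σ := by
  apply snapshot_eq
  intro d
  rw [mem_step]
  constructor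
  · rintro (hd | hd)
    · exact absurd (congrArg Prod.snd hd) h2
    · exact hd.1
  · intro hd
    refine Or.inr ⟨hd, fun he => h1 (congrArg Prod.snd he)⟩

/-- snapshot at the source time: the edge c is deleted. -/
lemma snapshot_step_src {X : Finset (Sym2 V × ℕ)} {c : Sym2 V} {τ τ' : ℕ}
    (hne : τ ≠ τ') :
    snapshot (insert (c,τ') (X.erase (c,τ))) τ = (snapshot X τ).deleteEdges {c} := by
  ext x y
  rw [snapshot_adj, del_adj, snapshot_adj, mem_step]
  constructor
  · rintro ⟨hd | hd, hxy⟩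
    · exact absurd (congrArg Prod.snd hd) hne
    · exact ⟨⟨hd.1, hxy⟩, fun he => hd.2 (by rw [he])⟩
  · rintro ⟨⟨hd, hxy⟩, hne'⟩
    exact ⟨Or.inr ⟨hd, fun he => hne' (congrArg Prod.fst he)⟩, hxy⟩

/-- snapshot at the target time is a supergraph. -/
lemma snapshot_step_tgt_mono {X : Finset (Sym2 V × ℕ)} {c : Sym2 V} {τ τ' : ℕ}
    (hne : τ ≠ τ') :
    snapshot X τ' ≤ snapshot (insert (c,τ') (X.erase (c,τ))) τ' := by
  apply snapshot_mono
  intro d hd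
  rw [mem_step]
  refine Or.inr ⟨hd, fun he => hne (congrArg Prod.snd he).symm⟩

/-- at the target time, deleting c recovers the old snapshot minus c. -/
lemma snapshot_step_tgt_del {X : Finset (Sym2 V × ℕ)} {c : Sym2 V} {τ τ' : ℕ}
    (hne : τ ≠ τ') :
    (snapshot (insert (c,τ') (X.erase (c,τ))) τ').deleteEdges {c}
      = (snapshot X τ').deleteEdges {c} := by
  ext x y
  rw [del_adj, del_adj, snapshot_adj, snapshot_adj, mem_step]
  constructor
  · rintro ⟨⟨hd | hd, hxy⟩, hc⟩
    · exact absurd (congrArg Prod.fst hd) hc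
    · exact ⟨⟨hd.1, hxy⟩, hc⟩
  · rintro ⟨⟨hd, hxy⟩, hc⟩
    exact ⟨⟨Or.inr ⟨hd, fun he => hne (congrArg Prod.snd he).symm⟩, hxy⟩, hc⟩


lemma reach_of_not_isBridge {G : SimpleGraph V} {a b : V} (hadj : G.Adj a b)
    (h : ¬ G.IsBridge s(a,b)) : (G.deleteEdges {s(a,b)}).Reachable a b := by
  rw [isBridge_iff] at h
  push_neg at h
  exact h

lemma not_isBridge_of_del_preconnected {G : SimpleGraph V} {c : Sym2 V}
    (h : (G.deleteEdges {c}).Preconnected) : ¬ G.IsBridge c := by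
  induction c using Sym2.ind with
  | _ x y =>
    rw [isBridge_iff]
    intro hnr
    exact hnr (h x y)

lemma del_mono {G H : SimpleGraph V} {c : Sym2 V} (h : G ≤ H) :
    G.deleteEdges {c} ≤ H.deleteEdges {c} := by
  intro x y hxy
  rw [del_adj] at hxy ⊢
  exact ⟨h hxy.1, hxy.2⟩

lemma del_eq_of_not_mem {X : Finset (Sym2 V × ℕ)} {c : Sym2 V} {τ : ℕ}
    (h : (c,τ) ∉ X) : (snapshot X τ).deleteEdges {c} = snapshot X τ := by
  ext x y
  rw [del_adj, snapshot_adj]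
  refine ⟨fun h' => h'.1, fun h' => ⟨h', fun he => h ?_⟩⟩
  rw [← he]
  exact h'.1

lemma del_connected' {S : SimpleGraph V} {c : Sym2 V} (hS : S.Connected)
    (h : ¬ S.IsBridge c) : (S.deleteEdges {c}).Connected := by
  induction c using Sym2.ind with
  | _ x y => exact del_connected hS h

lemma validSeq_prefix {T : ℕ} {f : ℕ → Finset (Sym2 V × ℕ)} {n i : ℕ}
    (h : ValidSeq T f n) (hi : i ≤ n) : ValidSeq T f i :=
  ⟨fun j hj => h.1 j (le_trans hj hi), fun j hj => h.2 j (lt_of_lt_of_le hj hi)⟩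

lemma chin_of_seq {T : ℕ} {E : Finset (Sym2 V × ℕ)} {f : ℕ → Finset (Sym2 V × ℕ)}
    {n i : ℕ} {e : Sym2 V} {t : ℕ}
    (h0 : f 0 = E) (hv : ValidSeq T f n) (hi : i ≤ n)
    (hm : (e,t) ∈ f i) (hb : ¬ (snapshot (f i) t).IsBridge e) : ChangeableIn T E e t i :=
  ⟨f, h0, validSeq_prefix hv hi, hm, hb⟩

lemma snapshot_const_of_not_icc {T : ℕ} {E : Finset (Sym2 V × ℕ)}
    {f : ℕ → Finset (Sym2 V × ℕ)} {n t : ℕ}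
    (h0 : f 0 = E) (hv : ValidSeq T f n) (ht : t ∉ Finset.Icc 1 T) :
    ∀ i ≤ n, snapshot (f i) t = snapshot E t := by
  intro i
  induction i with
  | zero => intro _; rw [h0]
  | succ i ih =>
    intro hi
    obtain ⟨c, τ, τ', hτI, hτ'I, hττ', hcX, hcX', heq⟩ := hv.2 i (by omega)
    rw [heq, snapshot_step_other (fun he : t = τ => ht (by rw [he]; exact hτI))
      (fun he : t = τ' => ht (by rw [he]; exact hτ'I))]
    exact ih (by omega)


def Cross (E : Finset (Sym2 V × ℕ)) (q : Sym2 V) (t : ℕ) (a b : V) (c : Sym2 V) : Prop :=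
  c ≠ q ∧ ∃ x y, c = s(x,y) ∧ ((snapshot E t).deleteEdges {q}).Reachable a x ∧
    ((snapshot E t).deleteEdges {q}).Reachable b y

lemma cross_swap {E : Finset (Sym2 V × ℕ)} {q : Sym2 V} {t : ℕ} {a b : V} {c : Sym2 V}
    (h : Cross E q t a b c) : Cross E q t b a c := by
  obtain ⟨hne, x, y, hc, hax, hby⟩ := h
  exact ⟨hne, y, x, hc.trans Sym2.eq_swap, hby, hax⟩

def Good (E X : Finset (Sym2 V × ℕ)) (q : Sym2 V) (t : ℕ) (a b : V) : Prop :=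
  (q,t) ∈ X ∧ (snapshot X t).IsBridge q ∧ ∀ c, Cross E q t a b c → (c,t) ∉ X

def Inv1 (E X : Finset (Sym2 V × ℕ)) (q : Sym2 V) (t : ℕ) (a : V) : Prop :=
  ∀ v, ((snapshot X t).deleteEdges {q}).Reachable a v ↔
       ((snapshot E t).deleteEdges {q}).Reachable a v

lemma insert_reach_transfer {E X : Finset (Sym2 V × ℕ)} {q c : Sym2 V} {t τ : ℕ} {a b : V}
    (hq : q = s(a,b))
    (hconnX : (snapshot X t).Connected)
    (hIA : Inv1 E X q t a) (hIB : Inv1 E X q t b)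
    (hcq : c ≠ q) (hnc : ¬ Cross E q t a b c) :
    ∀ u v, ((snapshot (insert (c,t) (X.erase (c,τ))) t).deleteEdges {q}).Reachable u v →
      ((snapshot X t).deleteEdges {q}).Reachable u v := by
  intro u v h
  refine reachable_transfer ?_ h
  intro x y hxy
  rw [del_adj, snapshot_adj, mem_step] at hxy
  obtain ⟨⟨hd | hd, hxyne⟩, hxyq⟩ := hxy
  · have hsc : s(x,y) = c := congrArg Prod.fst hd
    have hx := reach_or (a := a) (b := b) (S := snapshot X t) (hconnX.preconnected x a)
    have hy := reach_or (a := a) (b := b) (S := snapshot X t) (hconnX.preconnected y a)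
    rw [← hq] at hx hy
    rcases hx with hx | hx
    · rcases hy with hy | hy
      · exact hx.trans hy.symm
      · exact absurd ⟨hcq, x, y, hsc.symm, (hIA x).1 hx.symm, (hIB y).1 hy.symm⟩ hnc
    · rcases hy with hy | hy
      · exact absurd ⟨hcq, y, x, hsc.symm.trans Sym2.eq_swap,
          (hIA y).1 hy.symm, (hIB x).1 hx.symm⟩ hnc
      · exact hx.trans hy.symm
  · exact ((del_adj _ q x y).2 ⟨(snapshot_adj X t x y).2 ⟨hd.1, hxyne⟩, hxyq⟩).reachable

lemma inv_step {T : ℕ} {E X : Finset (Sym2 V × ℕ)} {c q : Sym2 V} {τ τ' t : ℕ} {a b : V}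
    (hq : q = s(a,b))
    (hττ' : τ ≠ τ') (hτI : τ ∈ Finset.Icc 1 T) (hτ'I : τ' ∈ Finset.Icc 1 T)
    (hcX : (c,τ) ∈ X) (hcX' : (c,τ') ∉ X)
    (hX : AlwaysConnected T X) (hX' : AlwaysConnected T (insert (c,τ') (X.erase (c,τ))))
    (ht : t ∈ Finset.Icc 1 T)
    (hbX : (snapshot X t).IsBridge q)
    (hbX' : (snapshot (insert (c,τ') (X.erase (c,τ))) t).IsBridge q)
    (hnc' : ∀ c', Cross E q t a b c' → (c',t) ∉ insert (c,τ') (X.erase (c,τ)))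
    (hIA : Inv1 E X q t a) (hIB : Inv1 E X q t b) :
    Inv1 E (insert (c,τ') (X.erase (c,τ))) q t a := by
  have hDX : ¬ ((snapshot X t).deleteEdges {q}).Reachable a b := by
    rw [hq] at hbX ⊢
    exact isBridge_not_reach hbX
  suffices key : ∀ v, ((snapshot (insert (c,τ') (X.erase (c,τ))) t).deleteEdges {q}).Reachable a v
      ↔ ((snapshot X t).deleteEdges {q}).Reachable a v by
    intro v
    rw [key v]
    exact hIA v
  by_cases h1 : t = τ
  · subst h1
    have hS' : snapshot (insert (c,τ') (X.erase (c,t))) t = (snapshot X t).deleteEdges {c} :=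
      snapshot_step_src hττ'
    have hmono : (snapshot (insert (c,τ') (X.erase (c,t))) t).deleteEdges {q}
        ≤ (snapshot X t).deleteEdges {q} := by
      intro x y hxy
      rw [del_adj, hS', del_adj] at hxy
      exact (del_adj _ _ x y).2 ⟨hxy.1.1, hxy.2⟩
    intro v
    constructor
    · intro hv
      exact Reachable.mono hmono hv
    · intro hv
      have hconn' := (hX' t ht).preconnected v a
      have hro := reach_or (a := a) (b := b) hconn'
      rw [← hq] at hro
      rcases hro with h' | h'
      · exact h'.symm
      · exact absurd (hv.trans (Reachable.mono hmono h')) hDX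
  · by_cases h2 : t = τ'
    · subst h2
      have hcq : c ≠ q := by
        intro he
        subst he
        apply hcX'
        have hadj := isBridge_adj (show (snapshot X t).IsBridge s(a,b) from hq ▸ hbX) (hX t ht).preconnected
        rw [snapshot_adj] at hadj
        rw [hq]
        exact hadj.1
      have hncc : ¬ Cross E q t a b c := fun hcr => hnc' c hcr (mem_step.2 (Or.inl rfl))
      have hτt : τ ≠ t := fun he => hττ' he
      intro v
      constructor
      · intro hv
        exact insert_reach_transfer hq (hX t ht) hIA hIB hcq hncc a v hv
      · intro hv
        exact Reachable.mono (del_mono (snapshot_step_tgt_mono hττ')) hv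
    · have hSeq : snapshot (insert (c,τ') (X.erase (c,τ))) t = snapshot X t :=
        snapshot_step_other h1 h2
      intro v
      rw [hSeq]


lemma step_main {T : ℕ} {E X X' : Finset (Sym2 V × ℕ)} {q : Sym2 V} {t : ℕ} {a b : V}
    (hq : q = s(a,b)) (hst : Step T X X')
    (hX : AlwaysConnected T X) (hX' : AlwaysConnected T X')
    (ht : t ∈ Finset.Icc 1 T)
    (hE0 : ¬ ((snapshot E t).deleteEdges {q}).Reachable a b)
    (hG : Good E X q t a b) (hIA : Inv1 E X q t a) (hIB : Inv1 E X q t b) :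
    ((q,t) ∈ X' ∧ ¬ (snapshot X' t).IsBridge q) ∨
    (Good E X' q t a b ∧ Inv1 E X' q t a ∧ Inv1 E X' q t b) := by
  obtain ⟨c, τ, τ', hτI, hτ'I, hττ', hcX, hcX', rfl⟩ := hst
  obtain ⟨hqX, hbX, hnc⟩ := hG
  have hDX : ¬ ((snapshot X t).deleteEdges {q}).Reachable a b := by
    rw [hq] at hbX ⊢
    exact isBridge_not_reach hbX
  -- the moved edge is not (q,t)
  have hne1 : (c,τ) ≠ (q,t) := by
    rintro he
    have hct : c = q := congrArg Prod.fst he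
    have hτt : τ = t := congrArg Prod.snd he
    subst hct
    subst hτt
    have hconn := (hX' _ ht).preconnected a b
    rw [snapshot_step_src hττ'] at hconn
    exact hDX hconn
  have hqX' : (q,t) ∈ insert (c,τ') (X.erase (c,τ)) :=
    mem_step.2 (Or.inr ⟨hqX, fun he => hne1 he.symm⟩)
  by_cases hb' : (snapshot (insert (c,τ') (X.erase (c,τ))) t).IsBridge q
  · -- still a bridge: establish Good and Inv
    right
    have hnc' : ∀ c', Cross E q t a b c' → (c',t) ∉ insert (c,τ') (X.erase (c,τ)) := by
      intro c' hcr hmem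
      rcases mem_step.1 hmem with hd | hd
      · -- the newly inserted edge is crossing: contradiction with hb'
        have h1 : c' = c := congrArg Prod.fst hd
        have h2 : t = τ' := congrArg Prod.snd hd
        subst h1
        obtain ⟨hcq, x, y, hcs, hax, hby⟩ := hcr
        have hxy : x ≠ y := by
          rintro rfl
          exact hE0 (hax.trans hby.symm)
        have hadj' : ((snapshot (insert (c',τ') (X.erase (c',τ))) t).deleteEdges {q}).Adj x y := by
          rw [del_adj, snapshot_adj]
          refine ⟨⟨mem_step.2 (Or.inl ?_), hxy⟩, by rw [← hcs]; exact hcq⟩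
          rw [← hcs, ← h2]
        have hmono : (snapshot X t).deleteEdges {q}
            ≤ (snapshot (insert (c',τ') (X.erase (c',τ))) t).deleteEdges {q} := by
          rw [h2]
          exact del_mono (snapshot_step_tgt_mono hττ')
        have hreach : ((snapshot (insert (c',τ') (X.erase (c',τ))) t).deleteEdges {q}).Reachable a b :=
          ((Reachable.mono hmono ((hIA x).2 hax)).trans hadj'.reachable).trans
            (Reachable.mono hmono ((hIB y).2 hby)).symm
        rw [hq] at hb' hreach
        exact isBridge_not_reach hb' hreach
      · exact hnc c' hcr hd.1
    refine ⟨⟨hqX', hb', hnc'⟩, ?_, ?_⟩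
    · exact inv_step hq hττ' hτI hτ'I hcX hcX' hX hX' ht hbX hb' hnc' hIA hIB
    · refine inv_step (hq.trans Sym2.eq_swap) hττ' hτI hτ'I hcX hcX' hX hX' ht hbX hb'
        (fun c' hcr => hnc' c' (cross_swap hcr)) hIB hIA
  · exact Or.inl ⟨hqX', hb'⟩

lemma seq_main {T : ℕ} {E : Finset (Sym2 V × ℕ)} {q : Sym2 V} {t : ℕ} {a b : V}
    {f : ℕ → Finset (Sym2 V × ℕ)} {n : ℕ}
    (hq : q = s(a,b)) (h0 : f 0 = E) (hv : ValidSeq T f n)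
    (ht : t ∈ Finset.Icc 1 T)
    (hGE : Good E E q t a b) :
    (∃ i ≤ n, ChangeableIn T E q t i) ∨
    (∀ i ≤ n, Good E (f i) q t a b ∧ Inv1 E (f i) q t a ∧ Inv1 E (f i) q t b) := by
  have hE0 : ¬ ((snapshot E t).deleteEdges {q}).Reachable a b := by
    have := hGE.2.1
    rw [hq] at this ⊢
    exact isBridge_not_reach this
  induction n with
  | zero =>
    right
    intro i hi
    interval_cases i
    rw [h0]
    exact ⟨hGE, fun v => Iff.rfl, fun v => Iff.rfl⟩
  | succ n ih =>
    rcases ih (validSeq_prefix hv (Nat.le_succ n)) with h' | h'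
    · exact Or.inl (h'.imp (fun i => And.imp_left (fun hi => le_trans hi (Nat.le_succ n))))
    · have hstep := hv.2 n (Nat.lt_succ_self n)
      obtain ⟨hGn, hIAn, hIBn⟩ := h' n le_rfl
      rcases step_main hq hstep (hv.1 n (Nat.le_succ n)) (hv.1 (n+1) le_rfl) ht hE0
          hGn hIAn hIBn with ⟨hmem, hnb⟩ | hgood
      · exact Or.inl ⟨n+1, le_rfl, chin_of_seq h0 hv le_rfl hmem hnb⟩
      · right
        intro i hi
        rcases Nat.eq_or_lt_of_le hi with rfl | hlt
        · exact ⟨hgood.1, hgood.2.1, hgood.2.2⟩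
        · exact h' i (Nat.lt_succ_iff.1 hlt)


lemma ml3 {T : ℕ} {E : Finset (Sym2 V × ℕ)} {q : Sym2 V} {t : ℕ} {a b : V} {r : ℕ}
    (hq : q = s(a,b)) (ht : t ∈ Finset.Icc 1 T)
    (hGE : Good E E q t a b) (h : KChangeable T E q t r) (hr : 1 ≤ r) :
    ∃ c s, Cross E q t a b c ∧ s ∈ Finset.Icc 1 T ∧ ChangeableIn T E c s (r-1) := by
  obtain ⟨f, h0, hv, hmem, hnb⟩ := h.1
  have hE0 : ¬ ((snapshot E t).deleteEdges {q}).Reachable a b := by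
    have hb := hGE.2.1
    rw [hq] at hb ⊢
    exact isBridge_not_reach hb
  have hab : a ≠ b := by
    have hb := hGE.2.1
    rw [hq] at hb
    exact isBridge_ne hb
  rcases seq_main hq h0 (validSeq_prefix hv (Nat.sub_le r 1)) ht hGE with ⟨i, hi, hch⟩ | hall
  · exact absurd hch (h.2 i (by omega))
  obtain ⟨hG, hIA, hIB⟩ := hall (r-1) le_rfl
  have hstep := hv.2 (r-1) (by omega)
  have hr1 : r - 1 + 1 = r := by omega
  rw [hr1] at hstep
  obtain ⟨c, τ, τ', hτI, hτ'I, hττ', hcX, hcX', heq⟩ := hstep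
  have hDreach : ((snapshot (f r) t).deleteEdges {q}).Reachable a b := by
    have hadj : (snapshot (f r) t).Adj a b := by
      rw [snapshot_adj]
      exact ⟨by rw [← hq]; exact hmem, hab⟩
    rw [hq] at hnb ⊢
    exact reach_of_not_isBridge hadj hnb
  have hDX : ¬ ((snapshot (f (r-1)) t).deleteEdges {q}).Reachable a b := by
    have hbX := hG.2.1
    rw [hq] at hbX ⊢
    exact isBridge_not_reach hbX
  have hne1 : (c,τ) ≠ (q,t) := by
    rintro he
    have h1 : c = q := congrArg Prod.fst he
    have h2 : τ = t := congrArg Prod.snd he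
    rw [heq] at hmem
    rcases mem_step.1 hmem with hd | hd
    · exact hττ' (h2.trans (congrArg Prod.snd hd))
    · exact hd.2 (by rw [h1, h2])
  by_cases h1 : t = τ
  · exfalso
    have hS : snapshot (f r) t = (snapshot (f (r-1)) t).deleteEdges {c} := by
      rw [heq, h1]
      exact snapshot_step_src hττ'
    have hmono : (snapshot (f r) t).deleteEdges {q} ≤ (snapshot (f (r-1)) t).deleteEdges {q} := by
      intro x y hxy
      rw [del_adj, hS, del_adj] at hxy
      exact (del_adj _ _ x y).2 ⟨hxy.1.1, hxy.2⟩
    exact hDX (Reachable.mono hmono hDreach)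
  · by_cases h2 : t = τ'
    · -- insertion at t: the inserted edge is crossing
      have hcq : c ≠ q := by
        rintro rfl
        exact hcX' (by rw [← h2]; exact hG.1)
      have hcr : Cross E q t a b c := by
        by_contra hncc
        apply hDX
        rw [heq, ← h2] at hDreach
        exact insert_reach_transfer hq (hv.1 (r-1) (by omega) t ht) hIA hIB hcq hncc a b hDreach
      refine ⟨c, τ, hcr, hτI, chin_of_seq h0 hv (by omega) hcX ?_⟩
      apply not_isBridge_of_del_preconnected
      have hS2 : snapshot (f r) τ = (snapshot (f (r-1)) τ).deleteEdges {c} := by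
        rw [heq]
        exact snapshot_step_src hττ'
      rw [← hS2]
      exact (hv.1 r le_rfl τ hτI).preconnected
    · exfalso
      have hS : snapshot (f r) t = snapshot (f (r-1)) t := by
        rw [heq]
        exact snapshot_step_other h1 h2
      rw [hS] at hnb
      exact hnb hG.2.1

lemma ml4 {T : ℕ} {E : Finset (Sym2 V × ℕ)} {q : Sym2 V} {t : ℕ} {a b : V} {c : Sym2 V} {s m : ℕ}
    (hq : q = s(a,b)) (ht : t ∈ Finset.Icc 1 T)
    (hGE : Good E E q t a b)
    (hcr : Cross E q t a b c) (hsI : s ∈ Finset.Icc 1 T) (hch : ChangeableIn T E c s m) :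
    ∃ i ≤ m+1, ChangeableIn T E q t i := by
  obtain ⟨g, h0, hv, hmem, hnb⟩ := hch
  have hE0 : ¬ ((snapshot E t).deleteEdges {q}).Reachable a b := by
    have hb := hGE.2.1
    rw [hq] at hb ⊢
    exact isBridge_not_reach hb
  rcases seq_main hq h0 hv ht hGE with ⟨i, hi, hch'⟩ | hall
  · exact ⟨i, by omega, hch'⟩
  obtain ⟨hG, hIA, hIB⟩ := hall m le_rfl
  have hst : s ≠ t := by
    rintro rfl
    exact hG.2.2 c hcr hmem
  have hctX : (c,t) ∉ g m := hG.2.2 c hcr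
  have hcq : c ≠ q := hcr.1
  set X' : Finset (Sym2 V × ℕ) := insert (c,t) ((g m).erase (c,s)) with hX'
  set f' : ℕ → Finset (Sym2 V × ℕ) := fun i => if i ≤ m then g i else X' with hf'
  have hfi : ∀ i ≤ m, f' i = g i := fun i hi => if_pos hi
  have hfm1 : f' (m+1) = X' := if_neg (by omega)
  have hf'0 : f' 0 = E := by rw [hfi 0 (by omega), h0]
  have hAX' : AlwaysConnected T X' := by
    intro σ hσ
    by_cases hσs : σ = s
    · subst hσs
      have hS : snapshot X' σ = (snapshot (g m) σ).deleteEdges {c} := snapshot_step_src hst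
      rw [hS]
      exact del_connected' (hv.1 m le_rfl σ hσ) hnb
    · by_cases hσt : σ = t
      · subst hσt
        exact Connected.mono (snapshot_step_tgt_mono hst) (hv.1 m le_rfl σ hσ)
      · rw [show snapshot X' σ = snapshot (g m) σ from snapshot_step_other hσs hσt]
        exact hv.1 m le_rfl σ hσ
  have hvs : ValidSeq T f' (m+1) := by
    constructor
    · intro i hi
      by_cases him : i ≤ m
      · rw [hfi i him]
        exact hv.1 i him
      · have : i = m + 1 := by omega
        rw [this, hfm1]
        exact hAX'
    · intro i hi
      by_cases him : i < m
      · rw [hfi i (by omega), hfi (i+1) (by omega)]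
        exact hv.2 i him
      · have him' : i = m := by omega
        subst him'
        rw [hfi i le_rfl, hfm1]
        exact ⟨c, s, t, hsI, ht, hst, hmem, hctX, rfl⟩
  have hqmem : (q,t) ∈ X' := mem_step.2 (Or.inr ⟨hG.1, fun he => hcq (congrArg Prod.fst he).symm⟩)
  have hnb' : ¬ (snapshot X' t).IsBridge q := by
    obtain ⟨-, x, y, hcs, hax, hby⟩ := hcr
    have hxy : x ≠ y := by
      rintro rfl
      exact hE0 (hax.trans hby.symm)
    have hadj' : ((snapshot X' t).deleteEdges {q}).Adj x y := by
      rw [del_adj, snapshot_adj]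
      refine ⟨⟨mem_step.2 (Or.inl (by rw [← hcs])), hxy⟩, by rw [← hcs]; exact hcq⟩
    have hmono : (snapshot (g m) t).deleteEdges {q} ≤ (snapshot X' t).deleteEdges {q} :=
      del_mono (snapshot_step_tgt_mono hst)
    have hreach : ((snapshot X' t).deleteEdges {q}).Reachable a b :=
      ((Reachable.mono hmono ((hIA x).2 hax)).trans hadj'.reachable).trans
        (Reachable.mono hmono ((hIB y).2 hby)).symm
    rw [hq]
    rw [hq] at hreach
    exact not_isBridge hreach
  exact ⟨m+1, le_rfl, f', hf'0, hvs, by rw [hfm1]; exact hqmem, by rw [hfm1]; exact hnb'⟩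

lemma ml5 {T : ℕ} {E : Finset (Sym2 V × ℕ)} {c : Sym2 V} {s' M : ℕ}
    (hch : ChangeableIn T E c s' M) (hmin : ∀ l < M, ¬ ChangeableIn T E c s' l)
    (hnE : (c,s') ∉ E) :
    ∃ s₂ ∈ Finset.Icc 1 T, ChangeableIn T E c s₂ (M-1) ∧ 1 ≤ M := by
  classical
  obtain ⟨g, h0, hv, hmem, hnb⟩ := hch
  have hM1 : 1 ≤ M := by
    rcases Nat.eq_zero_or_pos M with rfl | h
    · exact absurd (h0 ▸ hmem) hnE
    · exact h
  have hQ : ∃ j, (c,s') ∈ g j := ⟨M, hmem⟩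
  have hjm : (c,s') ∈ g (Nat.find hQ) := Nat.find_spec hQ
  have hjmin : ∀ i < Nat.find hQ, (c,s') ∉ g i := fun i hi => Nat.find_min hQ hi
  have hjle : Nat.find hQ ≤ M := Nat.find_le hmem
  set j := Nat.find hQ with hjdef
  have hj1 : 1 ≤ j := by
    rcases Nat.eq_zero_or_pos j with hj0 | h
    · exfalso
      apply hnE
      rw [← h0]
      rw [hj0] at hjm
      exact hjm
    · exact h
  have hstep := hv.2 (j-1) (by omega)
  have hj2 : j - 1 + 1 = j := by omega
  rw [hj2] at hstep
  obtain ⟨d, τ, τ', hτI, hτ'I, hττ', hdX, hdX', heq⟩ := hstep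
  have hins : (d,τ') = (c,s') := by
    rcases mem_step.1 (heq ▸ hjm) with hd | hd
    · exact hd.symm
    · exact absurd hd.1 (hjmin (j-1) (by omega))
  have hdc : d = c := congrArg Prod.fst hins
  have hτ's : τ' = s' := congrArg Prod.snd hins
  subst hdc
  subst hτ's
  have hS : (snapshot (g j) τ').deleteEdges {d} = snapshot (g (j-1)) τ' := by
    rw [heq, snapshot_step_tgt_del hττ', del_eq_of_not_mem (hjmin (j-1) (by omega))]
  have hnb' : ¬ (snapshot (g j) τ').IsBridge d := by
    apply not_isBridge_of_del_preconnected
    rw [hS]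
    exact (hv.1 (j-1) (by omega) τ' hτ'I).preconnected
  have hchj : ChangeableIn T E d τ' j := chin_of_seq h0 hv hjle hjm hnb'
  have hjM : j = M := le_antisymm hjle (le_of_not_gt (fun hlt => hmin j hlt hchj))
  have hnbsrc : ¬ (snapshot (g (j-1)) τ).IsBridge d := by
    apply not_isBridge_of_del_preconnected
    have hS2 : snapshot (g j) τ = (snapshot (g (j-1)) τ).deleteEdges {d} := by
      rw [heq]
      exact snapshot_step_src hττ'
    rw [← hS2]
    exact (hv.1 j hjle τ hτI).preconnected
  refine ⟨τ, hτI, ?_, hM1⟩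
  have hres : ChangeableIn T E d τ (j-1) := chin_of_seq h0 hv (by omega) hdX hnbsrc
  rw [hjM] at hres
  exact hres


lemma sym2_exists (z : Sym2 V) : ∃ x y : V, z = s(x,y) :=
  Sym2.ind (f := fun z => ∃ x y : V, z = s(x,y)) (fun x y => ⟨x, y, rfl⟩) z

end S7

/-- Continuity of Changeable Edges: If, for some `k ≥ 1`, the temporal edge
set `E` of an always-connected temporal graph is partitioned into `U` and `C` such that
every edge of `U` is not `l`-changeable for any `l ≤ k` and every edge of `C` is
`l'`-changeable for some `l' ≤ k - 1`, then every edge of `U` is unchangeable. -/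
theorem stmt_7 {V : Type*} [Fintype V] [DecidableEq V] (T : ℕ)
    (E U C : Finset (Sym2 V × ℕ)) (hE : AlwaysConnected T E) (k : ℕ) (hk : 1 ≤ k)
    (hpart : U ∪ C = E) (hdisj : Disjoint U C)
    (hU : ∀ p ∈ U, ∀ l ≤ k, ¬ KChangeable T E p.1 p.2 l)
    (hC : ∀ p ∈ C, ∃ l ≤ k - 1, KChangeable T E p.1 p.2 l) :
    ∀ p ∈ U, ∀ r : ℕ, ¬ KChangeable T E p.1 p.2 r := by
  classical
  have main : ∀ r : ℕ, ∀ p ∈ U, ¬ KChangeable T E p.1 p.2 r := by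
    intro r
    induction r using Nat.strong_induction_on with
    | _ r IH =>
      rintro ⟨q, t⟩ hp h
      by_cases hrk : r ≤ k
      · exact hU _ hp r hrk h
      push_neg at hrk
      have hpE : (q,t) ∈ E := by
        rw [← hpart]
        exact Finset.mem_union_left _ hp
      have hr1 : 1 ≤ r := by omega
      have hnot0 : ¬ ChangeableIn T E q t 0 := h.2 0 (by omega)
      have hbr : (snapshot E t).IsBridge q := by
        by_contra hb
        exact hnot0 ⟨fun _ => E, rfl,
          ⟨fun i _ => hE, fun i hi => absurd hi (Nat.not_lt_zero i)⟩, hpE, hb⟩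
      obtain ⟨a, b, hq⟩ := S7.sym2_exists q
      have hab : a ≠ b := by
        rw [hq] at hbr
        exact S7.isBridge_ne hbr
      have ht : t ∈ Finset.Icc 1 T := by
        by_contra htn
        obtain ⟨f, h0, hv, hmem, hnb⟩ := h.1
        rw [S7.snapshot_const_of_not_icc h0 hv htn r le_rfl] at hnb
        exact hnb hbr
      have hE0 : ¬ ((snapshot E t).deleteEdges {q}).Reachable a b := by
        rw [hq] at hbr ⊢
        exact S7.isBridge_not_reach hbr
      have hGE : S7.Good E E q t a b := by
        refine ⟨hpE, hbr, ?_⟩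
        rintro c ⟨hcq, x, y, hcs, hax, hby⟩ hmem
        have hxy : x ≠ y := by
          rintro rfl
          exact hE0 (hax.trans hby.symm)
        have hadj : ((snapshot E t).deleteEdges {q}).Adj x y := by
          rw [S7.del_adj, S7.snapshot_adj]
          exact ⟨⟨by rw [← hcs]; exact hmem, hxy⟩, by rw [← hcs]; exact hcq⟩
        exact hE0 ((hax.trans hadj.reachable).trans hby.symm)
      obtain ⟨c, s, hcr, hsI, hch⟩ := S7.ml3 hq ht hGE h hr1
      have hP : ∃ l, ∃ c s, S7.Cross E q t a b c ∧ s ∈ Finset.Icc 1 T ∧ ChangeableIn T E c s l :=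
        ⟨r-1, c, s, hcr, hsI, hch⟩
      obtain ⟨c₀, s₀, hcr₀, hs₀, hch₀⟩ := Nat.find_spec hP
      have hMle : Nat.find hP ≤ r - 1 := Nat.find_le ⟨c, s, hcr, hsI, hch⟩
      have hposmin : ∀ l < Nat.find hP, ¬ ChangeableIn T E c₀ s₀ l :=
        fun l hl hcl => Nat.find_min hP hl ⟨c₀, s₀, hcr₀, hs₀, hcl⟩
      obtain ⟨i, hi, hchq⟩ := S7.ml4 hq ht hGE hcr₀ hs₀ hch₀
      have hir : r ≤ i := by
        by_contra hlt
        exact h.2 i (by omega) hchq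
      have hMeq : Nat.find hP = r - 1 := by omega
      by_cases hc₀E : (c₀,s₀) ∈ E
      · rw [← hpart] at hc₀E
        rcases Finset.mem_union.1 hc₀E with hU' | hC'
        · exact IH (Nat.find hP) (by omega) (c₀,s₀) hU' ⟨hch₀, hposmin⟩
        · obtain ⟨l, hlk, hKl⟩ := hC _ hC'
          exact hposmin l (by omega) hKl.1
      · obtain ⟨s₂, hs₂, hch₂, hM1⟩ := S7.ml5 hch₀ hposmin hc₀E
        exact Nat.find_min hP (show Nat.find hP - 1 < Nat.find hP by omega)
          ⟨c₀, s₂, hcr₀, hs₂, hch₂⟩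
  intro p hp r
  exact main r p hp
end

section
/- If a temporal edge (e,t) of an always-connected temporal graph G is unchangeable, then (e,t) is a bridge in every temporal graph reachable from G by a valid reconfiguration sequence; consequently, if (e,t) ∈ E(G₁) \ E(G₂) is unchangeable in G₁, there is no valid reconfiguration sequence from G₁ to G₂. -/
lemma snapshot_relabel {V : Type*} [DecidableEq V] (E : Finset (Sym2 V × ℕ))
    (e : Sym2 V) (t t' : ℕ) (h : t ≠ t') :
    snapshot (insert (e, t') (E.erase (e, t))) t
      = snapshot E t \ SimpleGraph.fromEdgeSet {e} := by
  ext a b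
  simp only [snapshot, SimpleGraph.fromEdgeSet_adj, Set.mem_setOf_eq, Finset.mem_insert,
    Finset.mem_erase, Prod.mk.injEq, SimpleGraph.sdiff_adj, Set.mem_singleton_iff, ne_eq]
  constructor
  · rintro ⟨(⟨rfl, rfl⟩ | ⟨hne, hm⟩), hab⟩
    · exact absurd rfl h
    · refine ⟨⟨hm, hab⟩, ?_⟩
      rintro ⟨rfl, -⟩
      exact hne (by simp)
  · rintro ⟨⟨hm, hab⟩, hne⟩
    refine ⟨Or.inr ⟨?_, hm⟩, hab⟩
    rintro ⟨rfl, -⟩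
    exact hne ⟨rfl, hab⟩

lemma not_connected_del {V : Type*} (G : SimpleGraph V) (e : Sym2 V) (hb : G.IsBridge e) :
    ¬ (G \ SimpleGraph.fromEdgeSet {e}).Connected := by
  induction e using Sym2.ind with
  | _ u v =>
    rw [SimpleGraph.isBridge_iff] at hb
    intro hc
    exact hb (hc.preconnected u v)

lemma mem_of_validSeq {V : Type*} [DecidableEq V] (T : ℕ) (E₁ : Finset (Sym2 V × ℕ))
    (e : Sym2 V) (t : ℕ) (he : (e, t) ∈ E₁)
    (hunch : ∀ k : ℕ, ¬ ChangeableIn T E₁ e t k) :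
    ∀ (k : ℕ) (f : ℕ → Finset (Sym2 V × ℕ)), f 0 = E₁ → ValidSeq T f k → (e, t) ∈ f k := by
  intro k
  induction k with
  | zero => intro f h0 _; rw [h0]; exact he
  | succ k ih =>
    intro f h0 hv
    have hvk : ValidSeq T f k :=
      ⟨fun i hi => hv.1 i (hi.trans (Nat.le_succ k)),
       fun i hi => hv.2 i (hi.trans (Nat.lt_succ_self k))⟩
    have hmk : (e, t) ∈ f k := ih f h0 hvk
    have hbr : (snapshot (f k) t).IsBridge e := by
      by_contra hnb
      exact hunch k ⟨f, h0, hvk, hmk, hnb⟩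
    obtain ⟨e₀, t₀, t', ht₀, ht', hne, hmem, hnot, hE'⟩ := hv.2 k (Nat.lt_succ_self k)
    by_cases hc : (e₀, t₀) = (e, t)
    · exfalso
      obtain ⟨rfl, rfl⟩ := Prod.mk.injEq .. ▸ hc
      have hsnap : snapshot (f (k + 1)) t₀ = snapshot (f k) t₀ \ SimpleGraph.fromEdgeSet {e₀} := by
        rw [hE']; exact snapshot_relabel _ _ _ _ hne
      have hconn : (snapshot (f (k + 1)) t₀).Connected := hv.1 (k + 1) le_rfl t₀ ht₀
      rw [hsnap] at hconn
      exact not_connected_del _ _ hbr hconn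
    · rw [hE']
      exact Finset.mem_insert_of_mem (Finset.mem_erase.mpr ⟨fun h => hc h.symm, hmk⟩)

/-- If a temporal edge `(e,t)` of an always-connected temporal graph `E₁` is
unchangeable (not `k`-changeable for any `k`), then in every temporal graph reachable
from `E₁` by a valid reconfiguration sequence, `(e,t)` is still present and a bridge of
its snapshot; consequently, if `(e,t) ∈ E₁ \ E₂`, there is no valid reconfiguration
sequence from `E₁` to `E₂`. -/
theorem stmt_9 {V : Type*} [Fintype V] [DecidableEq V] (T : ℕ)
    (E₁ E₂ : Finset (Sym2 V × ℕ)) (hE₁ : AlwaysConnected T E₁) (hE₂ : AlwaysConnected T E₂)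
    (e : Sym2 V) (t : ℕ) (he : (e, t) ∈ E₁)
    (hunch : ∀ k : ℕ, ¬ ChangeableIn T E₁ e t k) :
    (∀ (f : ℕ → Finset (Sym2 V × ℕ)) (k : ℕ), f 0 = E₁ → ValidSeq T f k →
        (e, t) ∈ f k ∧ (snapshot (f k) t).IsBridge e) ∧
    ((e, t) ∉ E₂ →
      ¬ ∃ (f : ℕ → Finset (Sym2 V × ℕ)) (k : ℕ), f 0 = E₁ ∧ f k = E₂ ∧ ValidSeq T f k) := by
  have hmain : ∀ (f : ℕ → Finset (Sym2 V × ℕ)) (k : ℕ), f 0 = E₁ → ValidSeq T f k →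
      (e, t) ∈ f k ∧ (snapshot (f k) t).IsBridge e := by
    intro f k h0 hv
    have hm : (e, t) ∈ f k := mem_of_validSeq T E₁ e t he hunch k f h0 hv
    refine ⟨hm, ?_⟩
    by_contra hnb
    exact hunch k ⟨f, h0, hv, hm, hnb⟩
  refine ⟨hmain, fun hne ⟨f, k, h0, hk, hv⟩ => hne (hk ▸ (hmain f k h0 hv).1)⟩
end

section
/- Let G and H be finite simple graphs on the same vertex set such that every non-bridge edge of G is also an edge of H, and G is connected. If edge f is a non-bridge of G and f ∈ H, then f is a non-bridge of H. -/
/-- Let `G` and `H` be finite simple graphs on the same vertex set such that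
every non-bridge edge of `G` is also an edge of `H`, and `G` is connected. If `f` is a
non-bridge edge of `G` and an edge of `H`, then `f` is a non-bridge of `H`. -/
theorem stmt_11 {V : Type*} [Fintype V] (G H : SimpleGraph V) (hG : G.Connected)
    (hGH : ∀ f ∈ G.edgeSet, ¬ G.IsBridge f → f ∈ H.edgeSet)
    (f : Sym2 V) (hf : f ∈ G.edgeSet) (hnb : ¬ G.IsBridge f) (hfH : f ∈ H.edgeSet) :
    ¬ H.IsBridge f := by
  induction f with
  | h v w =>
    rw [SimpleGraph.isBridge_iff_adj_and_forall_cycle_notMem hf] at hnb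
    push_neg at hnb
    obtain ⟨u, p, hp, hfp⟩ := hnb
    -- every edge of p is in H
    have hedges : ∀ e ∈ p.edges, e ∈ H.edgeSet := by
      intro e he
      refine hGH e (p.edges_subset_edgeSet he) ?_
      induction e with
      | h a b =>
        rw [SimpleGraph.isBridge_iff_adj_and_forall_cycle_notMem (p.edges_subset_edgeSet he)]
        push_neg
        exact ⟨u, p, hp, he⟩
    rw [SimpleGraph.isBridge_iff_adj_and_forall_cycle_notMem hfH]
    push_neg
    exact ⟨u, p.transfer H hedges, hp.transfer hedges,
      by rwa [SimpleGraph.Walk.edges_transfer]⟩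
end
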